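/- Let g, s ∈ R^n with g ≠ 0 and s ≠ 0, let H ∈ R^{2×2} be symmetric with ĉ1 ≤ λ_min(H) ≤ λ_max(H) ≤ ĉ2 for 0 < ĉ1 ≤ ĉ2, and let (α, β) = H⁻¹ (‖g‖², −gᵀs)ᵀ. Define d = −α g + β s. Then gᵀ d ≤ −(1/ĉ2)‖g‖⁴. -/

import Mathlib

open Matrix

theorem H_descent_bound
    (n : ℕ) (g s : Fin n → ℝ) (hg : g ≠ 0) (hs : s ≠ 0)
    (c₁ c₂ : ℝ) (hc₁ : 0 < c₁) (hc : c₁ ≤ c₂)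
    (H : Matrix (Fin 2) (Fin 2) ℝ) (hHsymm : H.IsSymm)
    (hH : ∀ x : Fin 2 → ℝ, c₁ * (x ⬝ᵥ x) ≤ x ⬝ᵥ (H *ᵥ x) ∧ x ⬝ᵥ (H *ᵥ x) ≤ c₂ * (x ⬝ᵥ x))
    (α β : ℝ) (hαβ : ![α, β] = H⁻¹ *ᵥ ![g ⬝ᵥ g, -(g ⬝ᵥ s)])
    (d : Fin n → ℝ) (hd : d = (-α) • g + β • s) :
    g ⬝ᵥ d ≤ -(1/c₂) * (g ⬝ᵥ g)^2 := by
  have hc₂ : 0 < c₂ := lt_of_lt_of_le hc₁ hc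
  have hb : H 1 0 = H 0 1 := hHsymm.apply 0 1
  have hself : ∀ (y : Fin 2 → ℝ), 0 ≤ y ⬝ᵥ y :=
    fun y => Finset.sum_nonneg fun i _ => mul_self_nonneg _
  -- H is invertible
  have hdet : H.det ≠ 0 := by
    intro h0
    obtain ⟨x, hx, hHx⟩ := (Matrix.exists_mulVec_eq_zero_iff).2 h0
    have h1 := (hH x).1
    rw [hHx] at h1
    have hxx : 0 < x ⬝ᵥ x := by
      rcases (hself x).lt_or_eq with h | h
      · exact h
      · exact absurd ((dotProduct_self_eq_zero).1 h.symm) hx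
    simp [dotProduct, Fin.sum_univ_two] at h1 hxx
    nlinarith
  have hHw : H *ᵥ ![α, β] = ![g ⬝ᵥ g, -(g ⬝ᵥ s)] := by
    rw [hαβ, Matrix.mulVec_mulVec, Matrix.mul_nonsing_inv H (isUnit_iff_ne_zero.2 hdet),
      Matrix.one_mulVec]
  -- key inequality: ‖Hw‖² ≤ c₂ wᵀHw
  have key : ∀ w : Fin 2 → ℝ, (H *ᵥ w) ⬝ᵥ (H *ᵥ w) ≤ c₂ * (w ⬝ᵥ (H *ᵥ w)) := by
    intro w
    have h1 := (hH (c₂ • w - H *ᵥ w)).1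
    have h2 := (hH (H *ᵥ w)).2
    have hzz := hself (c₂ • w - H *ᵥ w)
    simp only [Matrix.mulVec, dotProduct, Fin.sum_univ_two, Pi.smul_apply, Pi.sub_apply,
      smul_eq_mul] at h1 h2 hzz ⊢
    rw [hb] at h1 h2 ⊢
    have main : 0 ≤ c₂ * (c₂ * (w 0 * (H 0 0 * w 0 + H 0 1 * w 1) +
        w 1 * (H 0 1 * w 0 + H 1 1 * w 1)) -
        ((H 0 0 * w 0 + H 0 1 * w 1) * (H 0 0 * w 0 + H 0 1 * w 1) +
         (H 0 1 * w 0 + H 1 1 * w 1) * (H 0 1 * w 0 + H 1 1 * w 1))) := by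
      nlinarith [mul_nonneg hc₁.le hzz]
    nlinarith [mul_pos hc₂ hc₂]
  have hk := key ![α, β]
  rw [hHw] at hk
  simp only [Matrix.cons_dotProduct, Matrix.head_cons, Matrix.tail_cons,
    Matrix.dotProduct_of_isEmpty, add_zero] at hk
  have hgd : g ⬝ᵥ d = -α * (g ⬝ᵥ g) + β * (g ⬝ᵥ s) := by
    rw [hd, dotProduct_add, dotProduct_smul, dotProduct_smul, smul_eq_mul, smul_eq_mul]
  have h4 : (g ⬝ᵥ g)^2 ≤ c₂ * (α * (g ⬝ᵥ g) - β * (g ⬝ᵥ s)) := by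
    nlinarith [sq_nonneg (g ⬝ᵥ s)]
  have h5 : (1/c₂) * (g ⬝ᵥ g)^2 ≤ α * (g ⬝ᵥ g) - β * (g ⬝ᵥ s) := by
    rw [div_mul_eq_mul_div, one_mul, div_le_iff₀ hc₂]
    linarith [h4]
  rw [hgd]
  linarith [h5]
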